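/- Let x > 1/2. Then Γ(x + 1/2)/Γ(x) > √(x - 1/4), and hence c(m) = Γ((m-1)/2)·√(m/2)/Γ(m/2) < √(2m/(2m-3)) for m > 3/2. -/

import Mathlib

open Filter Finset Real Topology

private lemma telescope (x : ℝ) (hx : 0 < x) (n : ℕ) :
    ∏ i ∈ Finset.range n, ((x + 3/4 + i) / (x + 3/4 + (i+1))) = (x + 3/4) / (x + 3/4 + n) := by
  induction n with
  | zero =>
    rw [Finset.prod_range_zero, Nat.cast_zero, add_zero, div_self (by positivity)]
  | succ n ih =>
    rw [Finset.prod_range_succ, ih]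
    have h1 : x + 3/4 + (n:ℝ) ≠ 0 := by positivity
    have h2 : x + 3/4 + ((n:ℝ)+1) ≠ 0 := by positivity
    push_cast
    field_simp
    try ring

private lemma term_le (a : ℝ) (ha : 0 < a) :
    (a - 1/4) / (a + 3/4) ≤ (a / (a + 1/2))^2 := by
  rw [div_pow, div_le_div_iff₀ (by positivity) (by positivity)]
  nlinarith [sq_nonneg a]

private lemma key (x : ℝ) (hx : 0 < x) :
    Real.sqrt (x - 1/4) < Real.Gamma (x + 1/2) / Real.Gamma x := by
  have hGx : 0 < Real.Gamma x := Real.Gamma_pos_of_pos hx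
  have hGx2 : 0 < Real.Gamma (x + 1/2) := Real.Gamma_pos_of_pos (by linarith)
  have hR : 0 < Real.Gamma (x + 1/2) / Real.Gamma x := by positivity
  rw [Real.sqrt_lt' hR]
  -- limit of q n = (GammaSeq (x+1/2) n / GammaSeq x n)^2
  have hq : Tendsto (fun n => (Real.GammaSeq (x+1/2) n / Real.GammaSeq x n)^2) atTop
      (𝓝 ((Real.Gamma (x+1/2) / Real.Gamma x)^2)) :=
    (((Real.GammaSeq_tendsto_Gamma (x+1/2)).div (Real.GammaSeq_tendsto_Gamma x) hGx.ne')).pow 2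
  have hL : Tendsto (fun n : ℕ => (x/(x+1/2))^2 * ((x + 3/4) * ((n:ℝ)/((n:ℝ) + (x + 3/4)))))
      atTop (𝓝 ((x/(x+1/2))^2 * ((x + 3/4) * 1))) := by
    exact (tendsto_const_nhds.mul ((tendsto_const_nhds.mul
      (tendsto_natCast_div_add_atTop (x + 3/4)))))
  have hle : (x/(x+1/2))^2 * ((x + 3/4) * 1) ≤ (Real.Gamma (x+1/2) / Real.Gamma x)^2 := by
    refine le_of_tendsto_of_tendsto hL hq ?_
    filter_upwards [eventually_ge_atTop 1] with n hn
    -- compute q n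
    have hN : (0:ℝ) < (n:ℝ) := by exact_mod_cast hn
    have hF : (0:ℝ) < (n.factorial : ℝ) := by exact_mod_cast n.factorial_pos
    have hP : (0:ℝ) < ∏ j ∈ Finset.range (n+1), (x + j) := by
      apply Finset.prod_pos; intro i _; positivity
    have hQ : (0:ℝ) < ∏ j ∈ Finset.range (n+1), (x + 1/2 + j) := by
      apply Finset.prod_pos; intro i _; positivity
    have hqn : (Real.GammaSeq (x+1/2) n / Real.GammaSeq x n)^2
        = (n:ℝ) * ∏ i ∈ Finset.range (n+1), ((x + i) / (x + i + 1/2))^2 := by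
      have hS : (n:ℝ) ^ (x + 1/2) = (n:ℝ) ^ x * (n:ℝ) ^ (1/2 : ℝ) := Real.rpow_add hN x (1/2)
      have hhalf : ((n:ℝ) ^ (1/2 : ℝ))^2 = (n:ℝ) := by
        rw [sq, ← Real.rpow_add hN]; norm_num
      have hNx : (0:ℝ) < (n:ℝ) ^ x := Real.rpow_pos_of_pos hN x
      have hprod : ∏ i ∈ Finset.range (n+1), ((x + i) / (x + i + 1/2))^2
          = (∏ j ∈ Finset.range (n+1), (x + j))^2 / (∏ j ∈ Finset.range (n+1), (x + 1/2 + j))^2 := by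
        rw [← Finset.prod_pow, ← Finset.prod_pow, ← Finset.prod_div_distrib]
        congr 1; ext i; rw [div_pow]; ring_nf
      have hrat : Real.GammaSeq (x+1/2) n / Real.GammaSeq x n
          = (n:ℝ) ^ (1/2 : ℝ) * ((∏ j ∈ Finset.range (n+1), (x + j))
            / (∏ j ∈ Finset.range (n+1), (x + 1/2 + j))) := by
        rw [Real.GammaSeq, Real.GammaSeq, hS]
        field_simp
      rw [hrat, mul_pow, hhalf, div_pow, ← hprod]
    rw [hqn]
    -- split off first factor
    have hsplit : ∏ i ∈ Finset.range (n+1), ((x + i) / (x + i + 1/2))^2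
        = (∏ i ∈ Finset.range n, ((x + (i+1:ℕ)) / (x + (i+1:ℕ) + 1/2))^2)
          * ((x + (0:ℕ)) / (x + (0:ℕ) + 1/2))^2 := Finset.prod_range_succ' _ n
    have htail : ∏ i ∈ Finset.range n, ((x + 3/4 + i) / (x + 3/4 + (i+1)))
        ≤ ∏ i ∈ Finset.range n, ((x + (i+1:ℕ)) / (x + (i+1:ℕ) + 1/2))^2 := by
      apply Finset.prod_le_prod
      · intro i _; positivity
      · intro i _
        have := term_le (x + (i+1:ℝ)) (by positivity)
        push_cast
        exact le_of_eq_of_le (by ring) (this.trans_eq (by ring))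
    rw [telescope x hx n] at htail
    rw [hsplit]
    have h0 : ((x + (0:ℕ)) / (x + (0:ℕ) + 1/2))^2 = (x/(x+1/2))^2 := by norm_num
    rw [h0]
    have hmul : (x/(x+1/2))^2 * ((x + 3/4) * ((n:ℝ)/((n:ℝ) + (x + 3/4))))
        = (n:ℝ) * (((x + 3/4) / (x + 3/4 + (n:ℝ))) * (x/(x+1/2))^2) := by
      field_simp
      ring
    rw [hmul]
    have : (x + 3/4) / (x + 3/4 + (n:ℝ)) * (x/(x+1/2))^2
        ≤ (∏ i ∈ Finset.range n, ((x + (i+1:ℕ)) / (x + (i+1:ℕ) + 1/2))^2) * (x/(x+1/2))^2 := by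
      apply mul_le_mul_of_nonneg_right htail (by positivity)
    nlinarith [this, hN]
  refine lt_of_lt_of_le ?_ hle
  have h2 : (0:ℝ) < (x + 1/2)^2 := by positivity
  rw [div_pow]
  rw [div_mul_eq_mul_div, lt_div_iff₀ h2]
  nlinarith

theorem gamma_ratio_gt_sqrt :
    (∀ x : ℝ, 1 / 2 < x → Real.sqrt (x - 1 / 4) < Real.Gamma (x + 1 / 2) / Real.Gamma x) ∧
      ∀ m : ℝ, 3 / 2 < m →
        Real.Gamma ((m - 1) / 2) * Real.sqrt (m / 2) / Real.Gamma (m / 2) <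
          Real.sqrt (2 * m / (2 * m - 3)) := by
  constructor
  · intro x hx; exact key x (by linarith)
  · intro m hm
    set x := (m - 1) / 2 with hxdef
    have hx : 0 < x := by simp only [hxdef]; linarith
    have h1 := key x hx
    have hx12 : x + 1/2 = m/2 := by simp only [hxdef]; ring
    have hx14 : x - 1/4 = (2*m - 3)/4 := by simp only [hxdef]; ring
    rw [hx12, hx14] at h1
    have hGa : 0 < Real.Gamma ((m-1)/2) := Real.Gamma_pos_of_pos (by linarith)
    have hGb : 0 < Real.Gamma (m/2) := Real.Gamma_pos_of_pos (by linarith)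
    have hs : 0 < Real.sqrt ((2*m - 3)/4) := Real.sqrt_pos.mpr (by linarith)
    have hsm : 0 < Real.sqrt (m/2) := Real.sqrt_pos.mpr (by linarith)
    have hrw : Real.Gamma ((m-1)/2) * Real.sqrt (m/2) / Real.Gamma (m/2)
        = Real.sqrt (m/2) / (Real.Gamma (m/2) / Real.Gamma ((m-1)/2)) := by
      field_simp
    rw [hrw]
    have hlt : Real.sqrt (m/2) / (Real.Gamma (m/2) / Real.Gamma ((m-1)/2))
        < Real.sqrt (m/2) / Real.sqrt ((2*m-3)/4) :=
      div_lt_div_of_pos_left hsm hs (by exact_mod_cast h1)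
    refine hlt.trans_le (le_of_eq ?_)
    rw [← Real.sqrt_div (by linarith : (0:ℝ) ≤ m/2)]
    congr 1
    have : 2*m - 3 ≠ 0 := by linarith
    field_simp
    ring
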